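/- In a finite Markov decision process where only the support of the transition probabilities is known, whether a state is almost-surely winning for the reachability objective depends only on the supports: if two MDPs have the same states, actions, and transition supports, then a state is almost-surely winning (there is a strategy reaching the target with probability 1) in one iff it is in the other. -/

import Mathlib

noncomputable section

/-- Probability of reaching `F` within `n` steps in a finite MDP with transition
probabilities `P`, under the (history-dependent, deterministic) strategy `σ`, starting
from history `h` and current state `v`. -/
def reachProb {V A : Type} [Fintype V] (P : V → A → V → ℝ) (σ : List V → A)
    (F : Set V) [DecidablePred (· ∈ F)] : ℕ → List V → V → ℝ
  | 0, _, v => if v ∈ F then 1 else 0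
  | n + 1, h, v =>
      if v ∈ F then 1
      else ∑ v' : V, P v (σ (h ++ [v])) v' * reachProb P σ F n (h ++ [v]) v'

/-- State `v` is almost-surely winning for the reachability objective `F`:
some strategy reaches `F` with probability `1` (in the limit over horizons). -/
def AlmostSure {V A : Type} [Fintype V] (P : V → A → V → ℝ) (F : Set V)
    [DecidablePred (· ∈ F)] (v : V) : Prop :=
  ∃ σ : List V → A, (⨆ n : ℕ, reachProb P σ F n [] v) = 1

namespace ASProof

open Filter Topology

variable {V A : Type} [Fintype V]

/-- Progress predicate: from `v` one can reach `F` within `n` support-steps, using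
only actions whose whole support stays in `W`. -/
def Prog (S : V → A → V → Prop) (F W : Set V) : ℕ → V → Prop
  | 0, v => v ∈ F
  | n + 1, v => v ∈ F ∨ ∃ a, (∀ v', S v a v' → v' ∈ W) ∧ ∃ v', S v a v' ∧ Prog S F W n v'

/-- Support-only characterization of almost-sure winning. -/
def SupportChar (S : V → A → V → Prop) (F : Set V) (v : V) : Prop :=
  ∃ W : Set V, v ∈ W ∧ ∀ u ∈ W, ∃ n, Prog S F W n u

section Basic

variable (P : V → A → V → ℝ) (σ : List V → A) (F : Set V) [DecidablePred (· ∈ F)]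

lemma reach_mem {u : V} (hu : u ∈ F) (n : ℕ) (h : List V) :
    reachProb P σ F n h u = 1 := by
  cases n <;> simp [reachProb, hu]

/-- `AS h u`: starting with history `h` at state `u`, strategy `σ` reaches `F` a.s. -/
def AS (h : List V) (u : V) : Prop := (⨆ n, reachProb P σ F n h u) = 1

variable (hP : ∀ v a, (∀ v', 0 ≤ P v a v') ∧ ∑ v' : V, P v a v' = 1)
include hP

lemma reach_nonneg : ∀ n (h : List V) (u : V), 0 ≤ reachProb P σ F n h u := by
  intro n
  induction n with
  | zero => intro h u; simp only [reachProb]; split <;> norm_num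
  | succ n ih =>
      intro h u
      by_cases hu : u ∈ F
      · simp [reachProb, hu]
      · simp only [reachProb, if_neg hu]
        exact Finset.sum_nonneg fun v' _ => mul_nonneg ((hP u _).1 v') (ih _ _)

lemma reach_le_one : ∀ n (h : List V) (u : V), reachProb P σ F n h u ≤ 1 := by
  intro n
  induction n with
  | zero => intro h u; simp only [reachProb]; split <;> norm_num
  | succ n ih =>
      intro h u
      by_cases hu : u ∈ F
      · simp [reachProb, hu]
      · simp only [reachProb, if_neg hu]
        calc ∑ v' : V, P u (σ (h ++ [u])) v' * reachProb P σ F n (h ++ [u]) v'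
            ≤ ∑ v' : V, P u (σ (h ++ [u])) v' * 1 :=
              Finset.sum_le_sum fun v' _ =>
                mul_le_mul_of_nonneg_left (ih _ _) ((hP u _).1 v')
          _ = 1 := by simp only [mul_one]; exact (hP u _).2

lemma reach_succ_le : ∀ n (h : List V) (u : V),
    reachProb P σ F n h u ≤ reachProb P σ F (n + 1) h u := by
  intro n
  induction n with
  | zero =>
      intro h u
      by_cases hu : u ∈ F
      · simp [reach_mem, hu]
      · simp only [reachProb, if_neg hu]
        refine Finset.sum_nonneg fun v' _ =>
          mul_nonneg ((hP u _).1 v') ?_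
        split <;> norm_num
  | succ n ih =>
      intro h u
      by_cases hu : u ∈ F
      · simp [reach_mem, hu]
      · simp only [reachProb, if_neg hu]
        exact Finset.sum_le_sum fun v' _ =>
          mul_le_mul_of_nonneg_left (ih _ _) ((hP u _).1 v')

lemma reach_monotone (h : List V) (u : V) :
    Monotone fun n => reachProb P σ F n h u :=
  monotone_nat_of_le_succ fun n => reach_succ_le P σ F hP n h u

lemma reach_bdd (h : List V) (u : V) :
    BddAbove (Set.range fun n => reachProb P σ F n h u) := by
  refine ⟨1, ?_⟩
  rintro x ⟨n, rfl⟩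
  exact reach_le_one P σ F hP n h u

end Basic

section Step

variable (P : V → A → V → ℝ) (σ : List V → A) (F : Set V) [DecidablePred (· ∈ F)]

lemma Prog.mono_succ {S : V → A → V → Prop} {W : Set V} :
    ∀ n (u : V), Prog S F W n u → Prog S F W (n + 1) u := by
  intro n
  induction n with
  | zero => intro u hu; exact Or.inl hu
  | succ n ih =>
      intro u hu
      rcases hu with hu | ⟨a, hsub, v', hS, hp⟩
      · exact Or.inl hu
      · exact Or.inr ⟨a, hsub, v', hS, ih v' hp⟩

lemma Prog.mono {S : V → A → V → Prop} {W : Set V} {m n : ℕ} (hmn : m ≤ n) {u : V}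
    (h : Prog S F W m u) : Prog S F W n u := by
  induction hmn with
  | refl => exact h
  | step _ ih => exact Prog.mono_succ F _ _ ih

lemma reach_shift (g : List V) :
    ∀ n (h : List V) (u : V),
      reachProb P (fun l => σ (g ++ l)) F n h u = reachProb P σ F n (g ++ h) u := by
  intro n
  induction n with
  | zero => intro h u; simp [reachProb]
  | succ n ih =>
      intro h u
      by_cases hu : u ∈ F
      · simp [reachProb, hu]
      · simp only [reachProb, if_neg hu]
        refine Finset.sum_congr rfl fun v' _ => ?_
        rw [ih (h ++ [u]) v', List.append_assoc]

variable (hP : ∀ v a, (∀ v', 0 ≤ P v a v') ∧ ∑ v' : V, P v a v' = 1)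
include hP

lemma AS_tendsto {h : List V} {u : V} (hAS : AS P σ F h u) :
    Tendsto (fun n => reachProb P σ F n h u) atTop (𝓝 1) := by
  have := tendsto_atTop_ciSup (reach_monotone P σ F hP h u) (reach_bdd P σ F hP h u)
  rwa [hAS] at this

lemma AS_of_almostSure {u : V} (hu : AS P σ F [] u) : AlmostSure P F u := ⟨σ, hu⟩

/-- If `σ` wins a.s. from history `h` at `u ∉ F`, then it wins a.s. from every
successor in the support of the played action. -/
lemma AS_step {h : List V} {u : V} (hAS : AS P σ F h u) (hu : u ∉ F) :
    ∀ v', 0 < P u (σ (h ++ [u])) v' → AS P σ F (h ++ [u]) v' := by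
  set a := σ (h ++ [u]) with ha
  set s : V → ℝ := fun v' => ⨆ n, reachProb P σ F n (h ++ [u]) v' with hs
  have hs_le : ∀ v', s v' ≤ 1 := fun v' =>
    ciSup_le fun n => reach_le_one P σ F hP n _ _
  have hB : Tendsto (fun n => reachProb P σ F (n + 1) h u) atTop (𝓝 1) :=
    (AS_tendsto P σ F hP hAS).comp (Filter.tendsto_add_atTop_nat 1)
  have hC : (fun n => reachProb P σ F (n + 1) h u)
      = fun n => ∑ v' : V, P u a v' * reachProb P σ F n (h ++ [u]) v' := by
    funext n; simp [reachProb, hu, ha]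
  have hD : Tendsto (fun n => ∑ v' : V, P u a v' * reachProb P σ F n (h ++ [u]) v')
      atTop (𝓝 (∑ v' : V, P u a v' * s v')) := by
    refine tendsto_finset_sum _ fun v' _ => ?_
    exact (tendsto_atTop_ciSup (reach_monotone P σ F hP _ _)
      (reach_bdd P σ F hP _ _)).const_mul _
  rw [hC] at hB
  have key : ∑ v' : V, P u a v' * s v' = 1 := tendsto_nhds_unique hD hB
  have hzero : ∑ v' : V, P u a v' * (1 - s v') = 0 := by
    simp only [mul_sub, Finset.sum_sub_distrib, mul_one, (hP u a).2, key, sub_self]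
  have hterms := (Finset.sum_eq_zero_iff_of_nonneg
    (fun v' _ => mul_nonneg ((hP u a).1 v') (by linarith [hs_le v']))).mp hzero
  intro v' hv'
  have h0 := hterms v' (Finset.mem_univ v')
  rcases mul_eq_zero.mp h0 with h1 | h1
  · exact absurd h1 (ne_of_gt hv')
  · have : s v' = 1 := by linarith
    exact this

end Step


section Avoid

variable (P : V → A → V → ℝ) (σ : List V → A) (F : Set V) [DecidablePred (· ∈ F)]
variable (hP : ∀ v a, (∀ v', 0 ≤ P v a v') ∧ ∑ v' : V, P v a v' = 1)
include hP

lemma one_sub_reach_succ (k : ℕ) (h : List V) {u : V} (hu : u ∉ F) :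
    1 - reachProb P σ F (k + 1) h u
      = ∑ v' : V, P u (σ (h ++ [u])) v' * (1 - reachProb P σ F k (h ++ [u]) v') := by
  simp only [mul_sub, Finset.sum_sub_distrib, mul_one, (hP u (σ (h ++ [u]))).2]
  have : reachProb P σ F (k + 1) h u
      = ∑ v' : V, P u (σ (h ++ [u])) v' * reachProb P σ F k (h ++ [u]) v' := by
    simp [reachProb, hu]
  rw [this]

lemma avoid_split (Q : V → Prop)
    (hQinv : ∀ (h : List V) (u : V), Q u → u ∉ F →
      ∀ v', 0 < P u (σ (h ++ [u])) v' → Q v')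
    (m : ℕ) (M : ℝ) (hM0 : 0 ≤ M)
    (hM : ∀ (h : List V) (u : V), Q u → 1 - reachProb P σ F m h u ≤ M) :
    ∀ n (h : List V) (u : V), Q u →
      1 - reachProb P σ F (n + m) h u ≤ M * (1 - reachProb P σ F n h u) := by
  intro n
  induction n with
  | zero =>
      intro h u hQ
      by_cases hu : u ∈ F
      · simp [reach_mem P σ F hu]
      · have h0 : reachProb P σ F 0 h u = 0 := by simp [reachProb, hu]
        rw [Nat.zero_add, h0]
        simpa using hM h u hQ
  | succ n ih =>
      intro h u hQ
      by_cases hu : u ∈ F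
      · simp [reach_mem P σ F hu]
      · rw [Nat.succ_add, one_sub_reach_succ P σ F hP (n + m) h hu,
          one_sub_reach_succ P σ F hP n h hu, Finset.mul_sum]
        refine Finset.sum_le_sum fun v' _ => ?_
        rcases ((hP u (σ (h ++ [u]))).1 v').lt_or_eq with hpos | hzero
        · have hQ' := hQinv h u hQ hu v' hpos
          have hih := ih (h ++ [u]) v' hQ'
          calc P u (σ (h ++ [u])) v' * (1 - reachProb P σ F (n + m) (h ++ [u]) v')
              ≤ P u (σ (h ++ [u])) v'
                * (M * (1 - reachProb P σ F n (h ++ [u]) v')) :=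
                mul_le_mul_of_nonneg_left hih hpos.le
            _ = M * (P u (σ (h ++ [u])) v'
                * (1 - reachProb P σ F n (h ++ [u]) v')) := by ring
        · rw [← hzero]; simp

lemma avoid_geom (Q : V → Prop)
    (hQinv : ∀ (h : List V) (u : V), Q u → u ∉ F →
      ∀ v', 0 < P u (σ (h ++ [u])) v' → Q v')
    (N : ℕ) (ε : ℝ) (hε1 : ε ≤ 1)
    (hreach : ∀ (h : List V) (u : V), Q u → ε ≤ reachProb P σ F N h u) :
    ∀ k (h : List V) (u : V), Q u →
      1 - reachProb P σ F (k * N) h u ≤ (1 - ε) ^ k := by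
  intro k
  induction k with
  | zero =>
      intro h u hQ
      have h1 := reach_nonneg P σ F hP 0 h u
      simpa using by linarith
  | succ k ih =>
      intro h u hQ
      have hco : (k + 1) * N = N + k * N := by ring
      rw [hco, pow_succ]
      have hsplit := avoid_split P σ F hP Q hQinv (k * N) ((1 - ε) ^ k)
        (pow_nonneg (by linarith) k) (fun h' u' hq => ih h' u' hq) N h u hQ
      have h2 : 1 - reachProb P σ F N h u ≤ 1 - ε := by linarith [hreach h u hQ]
      calc 1 - reachProb P σ F (N + k * N) h u
          ≤ (1 - ε) ^ k * (1 - reachProb P σ F N h u) := hsplit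
        _ ≤ (1 - ε) ^ k * (1 - ε) :=
            mul_le_mul_of_nonneg_left h2 (pow_nonneg (by linarith) k)

end Avoid


section Complete

variable (P : V → A → V → ℝ) (F : Set V) [DecidablePred (· ∈ F)]
variable (hP : ∀ v a, (∀ v', 0 ≤ P v a v') ∧ ∑ v' : V, P v a v' = 1)
include hP

lemma pos_prog (σ : List V → A) :
    ∀ n (h : List V) (u : V), AS P σ F h u → 0 < reachProb P σ F n h u →
      Prog (fun x a y => 0 < P x a y) F {w | AlmostSure P F w} n u := by
  intro n
  induction n with
  | zero =>
      intro h u _ hpos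
      simp only [reachProb] at hpos
      by_cases hu : u ∈ F
      · exact hu
      · rw [if_neg hu] at hpos; norm_num at hpos
  | succ n ih =>
      intro h u hAS hpos
      by_cases hu : u ∈ F
      · exact Or.inl hu
      · simp only [reachProb, if_neg hu] at hpos
        have hex : ∃ v' ∈ (Finset.univ : Finset V),
            (0:ℝ) < P u (σ (h ++ [u])) v' * reachProb P σ F n (h ++ [u]) v' := by
          apply Finset.exists_lt_of_sum_lt (f := fun _ => (0:ℝ))
          simpa using hpos
        obtain ⟨v', -, hv'⟩ := hex
        have hPa := (hP u (σ (h ++ [u]))).1 v'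
        have hra := reach_nonneg P σ F hP n (h ++ [u]) v'
        have hp1 : 0 < P u (σ (h ++ [u])) v' := by
          rcases hPa.lt_or_eq with h1 | h1
          · exact h1
          · exfalso; rw [← h1, zero_mul] at hv'; exact lt_irrefl 0 hv'
        have hr1 : 0 < reachProb P σ F n (h ++ [u]) v' := by
          rcases hra.lt_or_eq with h1 | h1
          · exact h1
          · exfalso; rw [← h1, mul_zero] at hv'; exact lt_irrefl 0 hv'
        have hASstep := AS_step P σ F hP hAS hu
        refine Or.inr ⟨σ (h ++ [u]), ?_, v', hp1,
          ih (h ++ [u]) v' (hASstep v' hp1) hr1⟩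
        intro v'' hv''
        have hAS'' := hASstep v'' hv''
        refine ⟨fun l => σ ((h ++ [u]) ++ l), ?_⟩
        have he : ∀ m, reachProb P (fun l => σ ((h ++ [u]) ++ l)) F m [] v''
            = reachProb P σ F m (h ++ [u]) v'' := by
          intro m; rw [reach_shift P σ F (h ++ [u]) m [] v'', List.append_nil]
        simp only [he]
        exact hAS''

lemma complete (v : V) (h : AlmostSure P F v) :
    SupportChar (fun u a u' => 0 < P u a u') F v := by
  refine ⟨{w | AlmostSure P F w}, h, ?_⟩
  intro u hu
  obtain ⟨σ, hσ⟩ := hu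
  have hAS : AS P σ F [] u := hσ
  have hex : ∃ n, 0 < reachProb P σ F n [] u := by
    by_contra hno
    push_neg at hno
    have hz : ∀ n, reachProb P σ F n [] u = 0 := fun n =>
      le_antisymm (hno n) (reach_nonneg P σ F hP n [] u)
    have : (⨆ n, reachProb P σ F n [] u) = 0 := by simp [hz]
    rw [this] at hσ
    norm_num at hσ
  obtain ⟨n, hn⟩ := hex
  exact ⟨n, pos_prog P F hP σ n [] u hAS hn⟩

end Complete


section Sound

variable [Nonempty A] (P : V → A → V → ℝ) (F : Set V) [DecidablePred (· ∈ F)]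
variable (hP : ∀ v a, (∀ v', 0 ≤ P v a v') ∧ ∑ v' : V, P v a v' = 1)
include hP

lemma sound (v : V)
    (hchar : SupportChar (fun u a u' => 0 < P u a u') F v) : AlmostSure P F v := by
  classical
  obtain ⟨W, hvW, hW⟩ := hchar
  set S : V → A → V → Prop := fun u a u' => 0 < P u a u' with hSdef
  set r : V → ℕ := fun u => sInf {n | Prog S F W n u} with hrdef
  have hrank : ∀ u ∈ W, Prog S F W (r u) u := fun u hu => Nat.sInf_mem (hW u hu)
  have hrle : ∀ (u : V) (n : ℕ), Prog S F W n u → r u ≤ n := fun u n hn =>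
    Nat.sInf_le hn
  have hchoice : ∀ u : V, ∃ a : A, u ∈ W → u ∉ F →
      (∀ v', S u a v' → v' ∈ W) ∧ ∃ v', S u a v' ∧ Prog S F W (r u - 1) v' := by
    intro u
    by_cases hu : u ∈ W ∧ u ∉ F
    · obtain ⟨hu1, hu2⟩ := hu
      have h1 := hrank u hu1
      have hr0 : r u ≠ 0 := by
        intro h0; rw [h0] at h1; exact hu2 h1
      obtain ⟨m, hm⟩ := Nat.exists_eq_succ_of_ne_zero hr0
      rw [hm] at h1
      rcases h1 with h1 | ⟨a, hsub, v', hS, hp⟩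
      · exact absurd h1 hu2
      · refine ⟨a, fun _ _ => ⟨hsub, v', hS, ?_⟩⟩
        rw [hm]
        simpa using hp
    · exact ⟨Classical.arbitrary A, fun h1 h2 => absurd ⟨h1, h2⟩ hu⟩
  choose α hα using hchoice
  set σ : List V → A := fun l => α (l.getLast?.getD v) with hσdef
  have hσlast : ∀ (h : List V) (u : V), σ (h ++ [u]) = α u := by
    intro h u; simp [hσdef]
  set T : Finset ℝ :=
    insert (1 : ℝ) (((Finset.univ ×ˢ Finset.univ : Finset (V × V)).filter
      (fun p => 0 < P p.1 (α p.1) p.2)).image fun p => P p.1 (α p.1) p.2) with hT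
  have hTne : T.Nonempty := ⟨1, Finset.mem_insert_self _ _⟩
  set δ : ℝ := T.min' hTne with hδ
  have hδpos : 0 < δ := by
    have hmem := T.min'_mem hTne
    rw [← hδ] at hmem
    rw [hT] at hmem
    rcases Finset.mem_insert.mp hmem with h1 | h1
    · rw [h1]; norm_num
    · obtain ⟨p, hp, hpe⟩ := Finset.mem_image.mp h1
      have := (Finset.mem_filter.mp hp).2
      rw [← hpe]; exact this
  have hδ1 : δ ≤ 1 := Finset.min'_le T 1 (Finset.mem_insert_self _ _)
  have hδle : ∀ (u v' : V), 0 < P u (α u) v' → δ ≤ P u (α u) v' := by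
    intro u v' h
    apply Finset.min'_le
    rw [hT]
    apply Finset.mem_insert_of_mem
    exact Finset.mem_image.mpr ⟨(u, v'),
      Finset.mem_filter.mpr ⟨by simp, h⟩, rfl⟩
  set N : ℕ := Finset.univ.sup r with hN
  have hranklem : ∀ n (u : V), u ∈ W → r u ≤ n → ∀ h : List V,
      δ ^ n ≤ reachProb P σ F n h u := by
    intro n
    induction n with
    | zero =>
        intro u hu hr h
        have hr0 : r u = 0 := Nat.le_zero.mp hr
        have hF : Prog S F W 0 u := by
          have := hrank u hu; rwa [hr0] at this
        have huF : u ∈ F := hF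
        simp [reach_mem P σ F huF]
    | succ n ih =>
        intro u hu hr h
        by_cases hF : u ∈ F
        · rw [reach_mem P σ F hF]
          exact pow_le_one₀ hδpos.le hδ1
        · obtain ⟨hsub, v₀, hS0, hp0⟩ := hα u hu hF
          have hv₀W : v₀ ∈ W := hsub v₀ hS0
          have hrun0 : r u ≠ 0 := by
            intro h0
            have := hrank u hu; rw [h0] at this; exact hF this
          have hrv₀ : r v₀ ≤ n := by
            have h1 := hrle v₀ _ hp0
            omega
          have hstep : reachProb P σ F (n + 1) h u
              = ∑ v' : V, P u (α u) v' * reachProb P σ F n (h ++ [u]) v' := by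
            simp only [reachProb, if_neg hF, hσlast]
          rw [hstep]
          have hterm : δ * δ ^ n ≤ P u (α u) v₀ * reachProb P σ F n (h ++ [u]) v₀ :=
            mul_le_mul (hδle u v₀ hS0) (ih v₀ hv₀W hrv₀ (h ++ [u]))
              (pow_nonneg hδpos.le n) ((hP u (α u)).1 v₀)
          have hsum : P u (α u) v₀ * reachProb P σ F n (h ++ [u]) v₀
              ≤ ∑ v' : V, P u (α u) v' * reachProb P σ F n (h ++ [u]) v' :=
            Finset.single_le_sum
              (fun v' _ => mul_nonneg ((hP u (α u)).1 v')
                (reach_nonneg P σ F hP n (h ++ [u]) v'))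
              (Finset.mem_univ v₀)
          calc δ ^ (n + 1) = δ * δ ^ n := by ring
            _ ≤ _ := le_trans hterm hsum
  set Q : V → Prop := fun u => u ∈ W ∨ u ∈ F with hQdef
  have hQinv : ∀ (h : List V) (u : V), Q u → u ∉ F →
      ∀ v', 0 < P u (σ (h ++ [u])) v' → Q v' := by
    intro h u hQ hF v' hv'
    have huW : u ∈ W := hQ.resolve_right hF
    rw [hσlast] at hv'
    exact Or.inl ((hα u huW hF).1 v' hv')
  have hQreach : ∀ (h : List V) (u : V), Q u → δ ^ N ≤ reachProb P σ F N h u := by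
    intro h u hQ
    by_cases hF : u ∈ F
    · rw [reach_mem P σ F hF]
      exact pow_le_one₀ hδpos.le hδ1
    · have huW : u ∈ W := hQ.resolve_right hF
      exact hranklem N u huW (Finset.le_sup (Finset.mem_univ u)) h
  set ε : ℝ := δ ^ N with hε
  have hε0 : 0 < ε := pow_pos hδpos N
  have hε1 : ε ≤ 1 := pow_le_one₀ hδpos.le hδ1
  have hgeom := avoid_geom P σ F hP Q hQinv N ε hε1 hQreach
  refine ⟨σ, le_antisymm (ciSup_le fun n => reach_le_one P σ F hP n [] v) ?_⟩
  have hbound : ∀ k : ℕ, 1 - (1 - ε) ^ k ≤ ⨆ n, reachProb P σ F n [] v := by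
    intro k
    have h1 := hgeom k [] v (Or.inl hvW)
    have h2 : reachProb P σ F (k * N) [] v ≤ ⨆ n, reachProb P σ F n [] v :=
      le_ciSup (reach_bdd P σ F hP [] v) (k * N)
    linarith
  have hlim : Tendsto (fun k : ℕ => 1 - (1 - ε) ^ k) atTop (𝓝 1) := by
    have h0 := tendsto_pow_atTop_nhds_zero_of_lt_one
      (sub_nonneg.mpr hε1) (by linarith : (1:ℝ) - ε < 1)
    have := tendsto_const_nhds.sub h0 (f := fun _ : ℕ => (1:ℝ))
    simpa using this
  exact le_of_tendsto' hlim hbound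

end Sound

end ASProof

/-- **Almost-sure reachability depends only on transition supports.**
If two finite MDPs have the same states, actions, and transition supports, with `F`
absorbing in both, then a state is almost-surely winning in one iff it is in the other. -/
theorem almost_sure_depends_only_on_support {V A : Type} [Fintype V] [Nonempty A]
    (P P' : V → A → V → ℝ) (F : Set V) [DecidablePred (· ∈ F)]
    (hP : ∀ v a, (∀ v', 0 ≤ P v a v') ∧ ∑ v' : V, P v a v' = 1)
    (hP' : ∀ v a, (∀ v', 0 ≤ P' v a v') ∧ ∑ v' : V, P' v a v' = 1)
    (hsupp : ∀ v a v', 0 < P v a v' ↔ 0 < P' v a v')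
    (habs : ∀ v ∈ F, ∀ a v', 0 < P v a v' → v' ∈ F)
    (habs' : ∀ v ∈ F, ∀ a v', 0 < P' v a v' → v' ∈ F)
    (v : V) :
    AlmostSure P F v ↔ AlmostSure P' F v := by
  have hS : (fun u a u' => 0 < P u a u') = (fun u a u' => 0 < P' u a u') := by
    funext u a u'
    exact propext (hsupp u a u')
  constructor
  · intro h
    have hc := ASProof.complete P F hP v h
    rw [hS] at hc
    exact ASProof.sound P' F hP' v hc
  · intro h
    have hc := ASProof.complete P' F hP' v h
    rw [← hS] at hc
    exact ASProof.sound P F hP v hc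

end
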